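/- Let C be an m-continued fraction (an m-pre-continued fraction satisfying Conditions 1–3). Then deg(q_k(z)) = d_k for all k ≥ 0, where d_k = t_1 + ... + t_k and t_i = deg(a_{i,h_i}(z)). -/

import Mathlib

open Polynomial HahnSeries

noncomputable section

variable {F : Type*} [Field F] {m : ℕ}

/-- `z = X⁻¹` viewed in `F((z⁻¹)) = F((X))`. -/
def zed (F : Type*) [Field F] : LaurentSeries F := HahnSeries.single (-1 : ℤ) 1

/-- Embedding of `F[z]` into `F((z⁻¹))`. -/
def Zpoly (p : Polynomial F) : LaurentSeries F := Polynomial.aeval (zed F) p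

/-- Componentwise polynomial part `⌊·⌋` (terms with nonnegative powers of `z`). -/
def polyPart (f : LaurentSeries F) : LaurentSeries F where
  coeff n := if n ≤ 0 then f.coeff n else 0
  isPWO_support' := f.isPWO_support'.mono (fun n hn => by
    simp only [Function.mem_support, ne_eq] at hn ⊢
    by_cases h : n ≤ 0
    · simpa [h] using hn
    · simp [h] at hn)

/-- Fractional part `{·}` (strictly negative powers of `z`). -/
def fracPart (f : LaurentSeries F) : LaurentSeries F := f - polyPart f

/-- Valuation with values in `WithTop ℤ`. -/
def vW (f : LaurentSeries F) : WithTop ℤ := open Classical in if f = 0 then ⊤ else (f.order : WithTop ℤ)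

/-- Valuation of a vector: the minimum of component valuations. -/
def vV (r : Fin m → LaurentSeries F) : WithTop ℤ := Finset.univ.inf fun i => vW (r i)

/-- Indexed valuation of one component paired with its index. -/
def ivc (f : LaurentSeries F) (i : Fin m) : WithTop (Lex (ℤ × Fin m)) :=
  open Classical in if f = 0 then ⊤ else ↑(toLex (f.order, i))

/-- The indexed valuation `Iv` on `F((z⁻¹))^m`, with `Iv 0 = ⊤`. -/
def Iv (r : Fin m → LaurentSeries F) : WithTop (Lex (ℤ × Fin m)) :=
  Finset.univ.inf fun i => ivc (r i) i


/-- An `m`-pre-continued fraction `[a_0, h_1, a_1, h_2, a_2, …]` with `a_0 = 0`.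
(`h 0` is irrelevant.) -/
structure MPreCF (F : Type*) [Field F] (m : ℕ) where
  h : ℕ → Fin m
  a : ℕ → Fin m → Polynomial F
  a_zero : a 0 = 0

/-- `E_h`: the identity matrix of order `m+1` with columns `h` and `m+1` exchanged. -/
def Emat (h : Fin m) : Matrix (Fin (m + 1)) (Fin (m + 1)) (Polynomial F) :=
  (1 : Matrix (Fin (m + 1)) (Fin (m + 1)) (Polynomial F)).submatrix id
    (Equiv.swap h.castSucc (Fin.last m))

/-- `A(a) = [[I_m, a], [0, 1]]`. -/
def Amat (a : Fin m → Polynomial F) : Matrix (Fin (m + 1)) (Fin (m + 1)) (Polynomial F) :=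
  Matrix.of fun i j =>
    if j = Fin.last m then (if hi : i = Fin.last m then 1 else a (i.castPred hi))
    else if i = j then 1 else 0

/-- `B_0 = I`, `B_k = B_{k-1} E_{h_k} A(a_k)`. -/
def MPreCF.B (C : MPreCF F m) : ℕ → Matrix (Fin (m + 1)) (Fin (m + 1)) (Polynomial F)
  | 0 => 1
  | k + 1 => MPreCF.B C k * Emat (C.h (k + 1)) * Amat (C.a (k + 1))

/-- `p_k`: the top `m` entries of the last column of `B_k`. -/
def MPreCF.p (C : MPreCF F m) (k : ℕ) (i : Fin m) : Polynomial F :=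
  C.B k i.castSucc (Fin.last m)

/-- `q_k`: the last entry of the last column of `B_k`. -/
def MPreCF.q (C : MPreCF F m) (k : ℕ) : Polynomial F :=
  C.B k (Fin.last m) (Fin.last m)


/-- `t_k = deg(a_{k,h_k})`. -/
def MPreCF.t (C : MPreCF F m) (k : ℕ) : ℕ := (C.a k (C.h k)).natDegree

/-- `d_k = t_1 + ⋯ + t_k`. -/
def MPreCF.d (C : MPreCF F m) (k : ℕ) : ℕ := ∑ i ∈ Finset.Icc 1 k, C.t i

/-- `v_{k,j} = ∑_{i ≤ k, h_i = j} t_i`. -/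
def MPreCF.vkj (C : MPreCF F m) (k : ℕ) (j : Fin m) : ℕ :=
  ∑ i ∈ Finset.Icc 1 k, if C.h i = j then C.t i else 0

/-- `v_k = v_{k,h_k}`. -/
def MPreCF.vk (C : MPreCF F m) (k : ℕ) : ℕ := C.vkj k (C.h k)

/-- `n_k = d_{k-1} + v_k`. -/
def MPreCF.n (C : MPreCF F m) (k : ℕ) : ℕ := C.d (k - 1) + C.vk k

/-- The vector `D_k a_k`, where `D_k = Diag(z^{-v_{k,1}}, …, z^{-v_{k,m}})`
(note `z^{-v} = X^v` in `F((X)) = F((z⁻¹))`). -/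
def MPreCF.Dmulak (C : MPreCF F m) (k : ℕ) : Fin m → LaurentSeries F :=
  fun j => HahnSeries.single ((C.vkj k j : ℤ)) 1 * Zpoly (C.a k j)

/-- An `m`-continued fraction: an `m`-pre-continued fraction of length `ω`
(a positive integer or `∞`) satisfying Conditions 1–3. -/
structure MCF (F : Type*) [Field F] (m : ℕ) extends MPreCF F m where
  ω : ℕ∞
  ω_pos : 1 ≤ ω
  cond1 : ∀ k : ℕ, 1 ≤ k → (k : ℕ∞) < ω → 1 ≤ (a k (h k)).natDegree
  cond2 : ∀ k : ℕ, 1 ≤ k → (k : ℕ∞) + 1 < ω →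
    toLex (((toMPreCF.vkj (k - 1) (h k) : ℤ)), h k) <
      toLex (((toMPreCF.vk (k + 1) : ℤ)), h (k + 1))
  cond3 : ∀ k : ℕ, 1 ≤ k → (k : ℕ∞) < ω →
    Iv (toMPreCF.Dmulak k) = ↑(toLex (((toMPreCF.vkj (k - 1) (h k) : ℤ)), h k))

/-- `r` is the limit of the approximants `p_k/q_k` (for infinite length):
the valuation of `r - p_k/q_k` tends to `∞`. -/
def MCF.IsLimit (C : MCF F m) (r : Fin m → LaurentSeries F) : Prop :=
  ∀ N : ℤ, ∃ K : ℕ, ∀ k ≥ K,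
    (N : WithTop ℤ) < vV (fun i => r i - Zpoly (C.toMPreCF.p k i) / Zpoly (C.toMPreCF.q k))

/-- `r = φ(C)`: the last approximant when `ω < ∞`, and the limit of the
approximants when `ω = ∞`. -/
def MCF.Represents (C : MCF F m) (r : Fin m → LaurentSeries F) : Prop :=
  (C.ω = ⊤ → C.IsLimit r) ∧
  (∀ w : ℕ, C.ω = (w : ℕ∞) →
    ∀ i, r i = Zpoly (C.toMPreCF.p (w - 1) i) / Zpoly (C.toMPreCF.q (w - 1)))



/-! ### Auxiliary lemmas -/

section Aux

lemma zed_pow (n : ℕ) : (zed F) ^ n = HahnSeries.single (-(n:ℤ)) 1 := by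
  rw [zed, HahnSeries.single_pow]
  simp

lemma Zpoly_monomial (n : ℕ) (c : F) :
    Zpoly (Polynomial.monomial n c) = HahnSeries.single (-(n:ℤ)) c := by
  rw [Zpoly, Polynomial.aeval_monomial, zed_pow]
  have hA : (algebraMap F (LaurentSeries F)) c = HahnSeries.single (0:ℤ) c := by
    rw [HahnSeries.algebraMap_apply', ← PowerSeries.C_eq_algebraMap, HahnSeries.ofPowerSeries_C,
      HahnSeries.C_apply]
  rw [hA, HahnSeries.single_mul_single]
  simp

lemma Zpoly_coeff (p : Polynomial F) (n : ℕ) : (Zpoly p).coeff (-(n:ℤ)) = p.coeff n := by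
  induction p using Polynomial.induction_on' with
  | add p q hp hq => rw [Zpoly, map_add, HahnSeries.coeff_add]; simp [Zpoly] at hp hq; simp [hp, hq]
  | monomial k c =>
      rw [Zpoly_monomial, Polynomial.coeff_monomial, HahnSeries.coeff_single]
      have : (-(n:ℤ) = -(k:ℤ)) ↔ (k = n) := by omega
      simp [this]

lemma Zpoly_ne_zero {p : Polynomial F} (hp : p ≠ 0) : Zpoly p ≠ 0 := by
  intro h
  apply hp
  have := Zpoly_coeff p p.natDegree
  rw [h] at this
  simp at this
  exact Polynomial.leadingCoeff_eq_zero.mp this.symm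

lemma Zpoly_order {p : Polynomial F} (hp : p ≠ 0) : (Zpoly p).order = -(p.natDegree : ℤ) := by
  apply le_antisymm
  · apply HahnSeries.order_le_of_coeff_ne_zero
    rw [Zpoly_coeff]
    exact Polynomial.leadingCoeff_ne_zero.mpr hp
  · by_contra hlt
    push_neg at hlt
    have h2 := HahnSeries.coeff_order_eq_zero.not.2 (Zpoly_ne_zero hp)
    set o := (Zpoly p).order with ho
    apply h2
    have : o ≤ 0 := le_trans hlt.le (by simp)
    obtain ⟨n, hn⟩ : ∃ n : ℕ, o = -(n:ℤ) := ⟨(-o).toNat, by omega⟩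
    rw [hn, Zpoly_coeff]
    apply Polynomial.coeff_eq_zero_of_natDegree_lt
    omega

/-- `Q_{k,j}`: the top entries of the last row of `B_k` (auxiliary denominators). -/
def MPreCF.Qe (C : MPreCF F m) (k : ℕ) (j : Fin m) : Polynomial F :=
  C.B k (Fin.last m) j.castSucc

lemma EA_eq (h : Fin m) (a : Fin m → Polynomial F) :
    Emat h * Amat a = Matrix.of fun i j =>
      Amat a (Equiv.swap h.castSucc (Fin.last m) i) j := by
  ext i j
  rw [Matrix.mul_apply]
  rw [Finset.sum_eq_single (Equiv.swap h.castSucc (Fin.last m) i)]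
  · simp [Emat, Matrix.one_apply, Matrix.submatrix_apply, Equiv.swap_apply_self]
  · intro c _ hc
    have : i ≠ Equiv.swap h.castSucc (Fin.last m) c := by
      intro he
      apply hc
      rw [he, Equiv.swap_apply_self]
    simp [Emat, Matrix.one_apply, Matrix.submatrix_apply, this]
  · intro habs
    exact absurd (Finset.mem_univ _) habs

lemma Amat_apply_last (a : Fin m → Polynomial F) (i : Fin m) :
    Amat a i.castSucc (Fin.last m) = a i := by
  rw [Amat]
  simp only [Matrix.of_apply]
  rw [if_pos trivial, dif_neg (Fin.castSucc_lt_last i).ne, Fin.castPred_castSucc]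

lemma Amat_last_last (a : Fin m → Polynomial F) : Amat a (Fin.last m) (Fin.last m) = 1 := by
  rw [Amat]
  simp only [Matrix.of_apply]
  simp

lemma Amat_castSucc (a : Fin m → Polynomial F) (i : Fin (m+1)) (j : Fin m) :
    Amat a i j.castSucc = if i = j.castSucc then 1 else 0 := by
  rw [Amat]
  simp only [Matrix.of_apply]
  rw [if_neg (Fin.castSucc_lt_last j).ne]

lemma B_succ_apply (C : MPreCF F m) (k : ℕ) (j : Fin (m+1)) :
    C.B (k+1) (Fin.last m) j =
      ∑ c, C.B k (Fin.last m) c *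
        Amat (C.a (k+1)) (Equiv.swap (C.h (k+1)).castSucc (Fin.last m) c) j := by
  have hB : C.B (k+1) = C.B k * Emat (C.h (k+1)) * Amat (C.a (k+1)) := rfl
  rw [hB, Matrix.mul_assoc, EA_eq, Matrix.mul_apply]
  rfl

lemma Qe_succ (C : MPreCF F m) (k : ℕ) (j : Fin m) :
    C.Qe (k+1) j = if j = C.h (k+1) then C.q k else C.Qe k j := by
  rw [MPreCF.Qe, B_succ_apply]
  rw [Finset.sum_eq_single (Equiv.swap (C.h (k+1)).castSucc (Fin.last m) j.castSucc)]
  · rw [Equiv.swap_apply_self, Amat_castSucc, if_pos rfl, mul_one]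
    by_cases hj : j = C.h (k+1)
    · subst hj
      rw [Equiv.swap_apply_left, if_pos rfl, MPreCF.q]
    · rw [Equiv.swap_apply_of_ne_of_ne (fun hc => hj (Fin.castSucc_injective m hc))
        (Fin.castSucc_lt_last j).ne, if_neg hj, MPreCF.Qe]
  · intro c _ hc
    have hcc : Equiv.swap (C.h (k+1)).castSucc (Fin.last m) c ≠ j.castSucc := by
      intro he
      apply hc
      rw [← he, Equiv.swap_apply_self]
    rw [Amat_castSucc, if_neg hcc, mul_zero]
  · intro habs
    exact absurd (Finset.mem_univ _) habs

lemma q_succ (C : MPreCF F m) (k : ℕ) :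
    C.q (k+1) = C.q k * C.a (k+1) (C.h (k+1)) + C.Qe k (C.h (k+1))
      + ∑ j ∈ Finset.univ.erase (C.h (k+1)), C.Qe k j * C.a (k+1) j := by
  rw [MPreCF.q, B_succ_apply, Fin.sum_univ_castSucc]
  have hlast : Equiv.swap (C.h (k+1)).castSucc (Fin.last m) (Fin.last m)
      = (C.h (k+1)).castSucc := Equiv.swap_apply_right _ _
  have hterm : ∀ c : Fin m,
      C.B k (Fin.last m) c.castSucc *
        Amat (C.a (k+1)) (Equiv.swap (C.h (k+1)).castSucc (Fin.last m) c.castSucc) (Fin.last m)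
      = if c = C.h (k+1) then C.Qe k c else C.Qe k c * C.a (k+1) c := by
    intro c
    by_cases hc : c = C.h (k+1)
    · subst hc
      rw [Equiv.swap_apply_left, Amat_last_last, mul_one, if_pos rfl, MPreCF.Qe]
    · rw [Equiv.swap_apply_of_ne_of_ne (fun hcc => hc (Fin.castSucc_injective m hcc))
        (Fin.castSucc_lt_last c).ne, Amat_apply_last, if_neg hc, MPreCF.Qe]
  have hsum : ∑ c : Fin m, C.B k (Fin.last m) c.castSucc *
        Amat (C.a (k+1)) (Equiv.swap (C.h (k+1)).castSucc (Fin.last m) c.castSucc) (Fin.last m)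
      = C.Qe k (C.h (k+1)) + ∑ j ∈ Finset.univ.erase (C.h (k+1)), C.Qe k j * C.a (k+1) j := by
    rw [Finset.sum_congr rfl (fun c _ => hterm c),
      ← Finset.add_sum_erase _ _ (Finset.mem_univ (C.h (k+1))), if_pos rfl]
    congr 1
    apply Finset.sum_congr rfl
    intro j hj
    rw [if_neg (Finset.ne_of_mem_erase hj)]
  rw [hsum, hlast, Amat_apply_last]
  have hq : C.B k (Fin.last m) (Fin.last m) = C.q k := rfl
  rw [hq]
  ring

lemma B_zero (C : MPreCF F m) : C.B 0 = 1 := rfl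

lemma q_zero (C : MPreCF F m) : C.q 0 = 1 := Matrix.one_apply_eq _

lemma Qe_zero (C : MPreCF F m) (j : Fin m) : C.Qe 0 j = 0 :=
  Matrix.one_apply_ne (Fin.castSucc_lt_last j).ne.symm

lemma vkj_zero (C : MPreCF F m) (j : Fin m) : C.vkj 0 j = 0 := by simp [MPreCF.vkj]

lemma d_zero (C : MPreCF F m) : C.d 0 = 0 := by simp [MPreCF.d]

lemma vkj_succ (C : MPreCF F m) (k : ℕ) (j : Fin m) :
    C.vkj (k+1) j = C.vkj k j + if C.h (k+1) = j then C.t (k+1) else 0 := by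
  rw [MPreCF.vkj, MPreCF.vkj, Finset.sum_Icc_succ_top (by omega : 1 ≤ k+1)]

lemma d_succ (C : MPreCF F m) (k : ℕ) : C.d (k+1) = C.d k + C.t (k+1) := by
  rw [MPreCF.d, MPreCF.d, Finset.sum_Icc_succ_top (by omega : 1 ≤ k+1)]

lemma d_mono (C : MPreCF F m) {k k' : ℕ} (h : k ≤ k') : C.d k ≤ C.d k' := by
  apply Finset.sum_le_sum_of_subset
  apply Finset.Icc_subset_Icc_right h


lemma cond3_bound (C : MCF F m) (k : ℕ) (hk1 : 1 ≤ k) (hk : (k : ℕ∞) < C.ω)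
    (j : Fin m) (ha : C.toMPreCF.a k j ≠ 0) :
    toLex (((C.toMPreCF.vkj (k-1) (C.toMPreCF.h k) : ℤ)), C.toMPreCF.h k) ≤
      toLex (((C.toMPreCF.vkj k j : ℤ) - (C.toMPreCF.a k j).natDegree), j) := by
  have h3 := C.cond3 k hk1 hk
  have hle : Iv (C.toMPreCF.Dmulak k) ≤ ivc (C.toMPreCF.Dmulak k j) j :=
    Finset.inf_le (Finset.mem_univ j)
  rw [h3] at hle
  have hne : C.toMPreCF.Dmulak k j ≠ 0 := by
    rw [MPreCF.Dmulak]
    exact mul_ne_zero (HahnSeries.single_ne_zero one_ne_zero) (Zpoly_ne_zero ha)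
  rw [ivc, if_neg hne] at hle
  have hord : (C.toMPreCF.Dmulak k j).order
      = (C.toMPreCF.vkj k j : ℤ) - (C.toMPreCF.a k j).natDegree := by
    rw [MPreCF.Dmulak, HahnSeries.order_mul (HahnSeries.single_ne_zero one_ne_zero)
      (Zpoly_ne_zero ha), HahnSeries.order_single one_ne_zero, Zpoly_order ha]
    ring
  rw [hord] at hle
  exact_mod_cast hle

lemma nh_step (C : MCF F m) (i : ℕ) (hi : 1 ≤ i) (hω : ((i : ℕ∞) + 1) < C.ω) :
    toLex ((C.toMPreCF.n i : ℤ), C.toMPreCF.h i)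
      < toLex ((C.toMPreCF.n (i+1) : ℤ), C.toMPreCF.h (i+1)) := by
  have h2 := C.cond2 i hi hω
  obtain ⟨i', rfl⟩ : ∃ i', i = i' + 1 := ⟨i - 1, by omega⟩
  have hv : C.toMPreCF.vk (i'+1) = C.toMPreCF.vkj i' (C.toMPreCF.h (i'+1)) + C.toMPreCF.t (i'+1) := by
    rw [MPreCF.vk, vkj_succ, if_pos rfl]
  have hn1 : C.toMPreCF.n (i'+1)
      = C.toMPreCF.d i' + C.toMPreCF.vkj i' (C.toMPreCF.h (i'+1)) + C.toMPreCF.t (i'+1) := by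
    rw [MPreCF.n, Nat.add_sub_cancel, hv]; omega
  have hn2 : C.toMPreCF.n (i'+1+1)
      = C.toMPreCF.d i' + C.toMPreCF.vk (i'+1+1) + C.toMPreCF.t (i'+1) := by
    rw [MPreCF.n, Nat.add_sub_cancel, d_succ]; omega
  have hred : C.toMPreCF.vkj (i'+1-1) (C.toMPreCF.h (i'+1))
      = C.toMPreCF.vkj i' (C.toMPreCF.h (i'+1)) := by rw [Nat.add_sub_cancel]
  rw [hred] at h2
  rw [Prod.Lex.toLex_lt_toLex] at h2 ⊢
  rcases h2 with h2 | ⟨h2a, h2b⟩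
  · left; rw [hn1, hn2]; push_cast; omega
  · right
    constructor
    · rw [hn1, hn2]; push_cast; omega
    · exact h2b

lemma nh_mono (C : MCF F m) (l k : ℕ) (hl : 1 ≤ l) (hlk : l < k) (hk : (k : ℕ∞) < C.ω) :
    toLex ((C.toMPreCF.n l : ℤ), C.toMPreCF.h l)
      < toLex ((C.toMPreCF.n k : ℤ), C.toMPreCF.h k) := by
  induction k with
  | zero => omega
  | succ k ih =>
      have hstepk : toLex ((C.toMPreCF.n k : ℤ), C.toMPreCF.h k)
          < toLex ((C.toMPreCF.n (k+1) : ℤ), C.toMPreCF.h (k+1)) := by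
        apply nh_step C k (by omega)
        calc ((k : ℕ∞) + 1) = ((k + 1 : ℕ) : ℕ∞) := by push_cast; ring
          _ < C.ω := hk
      by_cases hlk2 : l = k
      · subst hlk2; exact hstepk
      · exact lt_trans (ih (by omega)
          (lt_of_le_of_lt (Nat.cast_le.mpr (by omega)) hk)) hstepk


theorem main_induction (C : MCF F m) : ∀ k : ℕ, (k : ℕ∞) < C.ω →
    ((C.toMPreCF.q k).degree = ((C.toMPreCF.d k : ℕ) : WithBot ℕ)) ∧
    (∀ j : Fin m,
      (C.toMPreCF.Qe k j = 0 ∧ C.toMPreCF.vkj k j = 0) ∨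
      (∃ l, 1 ≤ l ∧ l ≤ k ∧ C.toMPreCF.h l = j ∧
        (C.toMPreCF.Qe k j).degree = ((C.toMPreCF.d (l-1) : ℕ) : WithBot ℕ) ∧
        C.toMPreCF.vkj k j = C.toMPreCF.vk l)) := by
  intro k
  induction k with
  | zero =>
      intro _
      refine ⟨?_, fun j => Or.inl ⟨Qe_zero _ _, vkj_zero _ _⟩⟩
      rw [q_zero, d_zero, Polynomial.degree_one]
      norm_num
  | succ k ih =>
      intro hk1
      have hk : (k : ℕ∞) < C.ω :=
        lt_of_le_of_lt (Nat.cast_le.mpr (Nat.le_succ k)) hk1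
      obtain ⟨ihq, ihQ⟩ := ih hk
      have hk1' : ((k+1 : ℕ) : ℕ∞) < C.ω := hk1
      have ht1 : 1 ≤ C.toMPreCF.t (k+1) := C.cond1 (k+1) (by omega) hk1'
      have ha_ne : C.toMPreCF.a (k+1) (C.toMPreCF.h (k+1)) ≠ 0 := by
        intro h0
        rw [MPreCF.t, h0] at ht1
        simp at ht1
      have hq_ne : C.toMPreCF.q k ≠ 0 := by
        intro h0
        rw [h0, Polynomial.degree_zero] at ihq
        exact absurd ihq.symm (by simp)
      have hT1 : (C.toMPreCF.q k * C.toMPreCF.a (k+1) (C.toMPreCF.h (k+1))).degree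
          = ((C.toMPreCF.d (k+1) : ℕ) : WithBot ℕ) := by
        rw [Polynomial.degree_mul, ihq, Polynomial.degree_eq_natDegree ha_ne, d_succ]
        rw [← MPreCF.t]
        push_cast
        ring
      -- middle term bound
      have hd_lt : (C.toMPreCF.d k : ℕ) < C.toMPreCF.d (k+1) := by
        rw [d_succ]; omega
      have hmid : (C.toMPreCF.Qe k (C.toMPreCF.h (k+1))).degree
          < ((C.toMPreCF.d (k+1) : ℕ) : WithBot ℕ) := by
        rcases ihQ (C.toMPreCF.h (k+1)) with ⟨h0, _⟩ | ⟨l, hl1, hlk, _, hdeg, _⟩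
        · rw [h0, Polynomial.degree_zero]
          exact WithBot.bot_lt_coe _
        · rw [hdeg]
          exact_mod_cast lt_of_le_of_lt (d_mono C.toMPreCF (by omega : l - 1 ≤ k)) hd_lt
      -- sum term bounds
      have hsum_bound : ∀ j ∈ Finset.univ.erase (C.toMPreCF.h (k+1)),
          (C.toMPreCF.Qe k j * C.toMPreCF.a (k+1) j).degree
            < ((C.toMPreCF.d (k+1) : ℕ) : WithBot ℕ) := by
        intro j hj
        have hjne : j ≠ C.toMPreCF.h (k+1) := Finset.ne_of_mem_erase hj
        by_cases hQ0 : C.toMPreCF.Qe k j = 0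
        · rw [hQ0, zero_mul, Polynomial.degree_zero]
          exact WithBot.bot_lt_coe _
        by_cases ha0 : C.toMPreCF.a (k+1) j = 0
        · rw [ha0, mul_zero, Polynomial.degree_zero]
          exact WithBot.bot_lt_coe _
        rcases ihQ j with ⟨h0, _⟩ | ⟨l, hl1, hlk, hhl, hdeg, hvkj⟩
        · exact absurd h0 hQ0
        -- the interesting case
        have hc3 := cond3_bound C (k+1) (by omega) hk1' j ha0
        rw [Nat.add_sub_cancel] at hc3
        have hvkj1 : C.toMPreCF.vkj (k+1) j = C.toMPreCF.vk l := by
          rw [vkj_succ, if_neg (fun he => hjne he.symm), add_zero, hvkj]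
        rw [hvkj1] at hc3
        have hnh := nh_mono C l (k+1) hl1 (by omega) hk1'
        have hnl : C.toMPreCF.n l = C.toMPreCF.d (l-1) + C.toMPreCF.vk l := rfl
        have hnk1 : C.toMPreCF.n (k+1)
            = C.toMPreCF.d k + C.toMPreCF.vkj k (C.toMPreCF.h (k+1)) + C.toMPreCF.t (k+1) := by
          rw [MPreCF.n, Nat.add_sub_cancel, MPreCF.vk, vkj_succ, if_pos rfl]
          omega
        rw [Prod.Lex.toLex_le_toLex] at hc3
        rw [Prod.Lex.toLex_lt_toLex] at hnh
        simp only at hc3 hnh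
        have hkey : C.toMPreCF.d (l-1) + (C.toMPreCF.a (k+1) j).natDegree
            < C.toMPreCF.d (k+1) := by
          rw [d_succ]
          rcases hc3 with hc3 | ⟨hc3a, hc3b⟩
          · have hnle : (C.toMPreCF.n l : ℤ) ≤ (C.toMPreCF.n (k+1) : ℤ) := by
              rcases hnh with hnh | ⟨hnh, _⟩
              · exact le_of_lt hnh
              · exact le_of_eq hnh
            rw [hnl, hnk1] at hnle
            push_cast at hnle hc3 ⊢
            omega
          · have hj_gt : C.toMPreCF.h (k+1) < j :=
              lt_of_le_of_ne hc3b (fun he => hjne he.symm)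
            have hnlt : (C.toMPreCF.n l : ℤ) < (C.toMPreCF.n (k+1) : ℤ) := by
              rcases hnh with hnh | ⟨_, hnh2⟩
              · exact hnh
              · rw [hhl] at hnh2
                exact absurd hj_gt (lt_asymm hnh2)
            rw [hnl, hnk1] at hnlt
            push_cast at hnlt hc3a ⊢
            omega
        rw [Polynomial.degree_mul, hdeg, Polynomial.degree_eq_natDegree ha0]
        exact_mod_cast hkey
      -- degree of the sum
      have hS : (∑ j ∈ Finset.univ.erase (C.toMPreCF.h (k+1)),
            C.toMPreCF.Qe k j * C.toMPreCF.a (k+1) j).degree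
          < ((C.toMPreCF.d (k+1) : ℕ) : WithBot ℕ) := by
        apply lt_of_le_of_lt (Polynomial.degree_sum_le _ _)
        rw [Finset.sup_lt_iff (WithBot.bot_lt_coe _)]
        exact hsum_bound
      have hrest : (C.toMPreCF.Qe k (C.toMPreCF.h (k+1))
            + ∑ j ∈ Finset.univ.erase (C.toMPreCF.h (k+1)),
              C.toMPreCF.Qe k j * C.toMPreCF.a (k+1) j).degree
          < ((C.toMPreCF.d (k+1) : ℕ) : WithBot ℕ) :=
        lt_of_le_of_lt (Polynomial.degree_add_le _ _) (max_lt hmid hS)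
      have hdq : (C.toMPreCF.q (k+1)).degree = ((C.toMPreCF.d (k+1) : ℕ) : WithBot ℕ) := by
        rw [q_succ, add_assoc, Polynomial.degree_add_eq_left_of_degree_lt (by rw [hT1]; exact hrest)]
        exact hT1
      refine ⟨hdq, fun j => ?_⟩
      by_cases hj : j = C.toMPreCF.h (k+1)
      · right
        refine ⟨k+1, by omega, le_refl _, hj.symm, ?_, ?_⟩
        · rw [Qe_succ, if_pos hj, Nat.add_sub_cancel]
          exact ihq
        · rw [hj]
          rfl
      · rcases ihQ j with ⟨h0, hv0⟩ | ⟨l, hl1, hlk, hhl, hdeg, hvkj⟩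
        · left
          constructor
          · rw [Qe_succ, if_neg hj, h0]
          · rw [vkj_succ, if_neg (fun he => hj he.symm), hv0]
        · right
          refine ⟨l, hl1, by omega, hhl, ?_, ?_⟩
          · rw [Qe_succ, if_neg hj]
            exact hdeg
          · rw [vkj_succ, if_neg (fun he => hj he.symm), add_zero]
            exact hvkj

end Aux

/-- For an `m`-continued fraction, `deg(q_k) = d_k` for all `0 ≤ k < ω`. -/
theorem stmt10 (F : Type*) [Field F] (m : ℕ) (C : MCF F m) (k : ℕ)
    (hk : (k : ℕ∞) < C.ω) :
    (C.toMPreCF.q k).degree = ((C.toMPreCF.d k : ℕ) : WithBot ℕ) := by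
  exact (main_induction C k hk).1

end
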